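/- Let n ≥ 1 and 1 ≤ q ≤ n. Let F be an n×n real matrix with every entry equal to +1 or −1 such that Fᵀ·F = n·I_n (a Hadamard matrix), and let X be the n×q submatrix consisting of the first q columns of F. Let w1,…,wn > 0, let p1,…,pn ≥ 0 with p1+⋯+pn = 1, let W = diag(w1·p1, …, wn·pn), and let w_M = max{w1,…,wn}. Then det(Xᵀ·W·X) ≥ n^n·(∏ᵢ wᵢ)·(∏ᵢ pᵢ)/w_M^{n−q}. -/

import Mathlib

open Matrix

/-- Determinant of a real positive semidefinite matrix is nonnegative. -/
lemma aux_psd_det_nonneg {m : Type*} [Fintype m] [DecidableEq m]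
    {M : Matrix m m ℝ} (hM : M.PosSemidef) : 0 ≤ M.det := by
  rw [hM.1.det_eq_prod_eigenvalues]
  exact Finset.prod_nonneg fun i _ => by simpa using hM.eigenvalues_nonneg i

/-- One-step Fischer inequality for a real symmetric matrix whose leading principal
block is positive definite. -/
lemma aux_fischer {k : ℕ} (M : Matrix (Fin (k+1)) (Fin (k+1)) ℝ)
    (hM : M.IsHermitian) (hA : (M.submatrix Fin.castSucc Fin.castSucc).PosDef) :
    M.det ≤ M (Fin.last k) (Fin.last k) * (M.submatrix Fin.castSucc Fin.castSucc).det := by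
  classical
  set A := M.submatrix Fin.castSucc Fin.castSucc with hAdef
  set b : Fin k → ℝ := fun i => M i.castSucc (Fin.last k) with hb
  set B : Matrix (Fin k) (Fin 1) ℝ := Matrix.of fun i _ => b i with hB
  set C : Matrix (Fin 1) (Fin k) ℝ := Matrix.of fun _ j => b j with hC
  set D : Matrix (Fin 1) (Fin 1) ℝ := Matrix.of fun _ _ => M (Fin.last k) (Fin.last k) with hD
  have hsym : ∀ j : Fin k, M (Fin.last k) j.castSucc = b j := by
    intro j
    have := congrFun (congrFun hM (Fin.last k)) j.castSucc
    simp only [conjTranspose_apply, star_trivial] at this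
    rw [← this, hb]
  have hblock : Matrix.fromBlocks A B C D = M.submatrix finSumFinEquiv finSumFinEquiv := by
    ext i j
    have h2 : ∀ z : Fin 1, (finSumFinEquiv (Sum.inr z) : Fin (k+1)) = Fin.last k := by
      intro z
      apply Fin.ext
      simp [Fin.last]
    have h1 : ∀ i : Fin k, Fin.castAdd 1 i = i.castSucc := fun i => rfl
    cases i <;> cases j <;>
      simp [Matrix.fromBlocks, h1, h2, hsym, hB, hC, hD, hAdef, hb]
  haveI : Invertible A := A.invertibleOfIsUnitDet hA.det_pos.ne'.isUnit
  have hdet : M.det = A.det * (D - C * A⁻¹ * B).det := by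
    rw [← Matrix.det_submatrix_equiv_self finSumFinEquiv M, ← hblock,
      Matrix.det_fromBlocks₁₁, invOf_eq_nonsing_inv]
  have hquad : 0 ≤ (C * A⁻¹ * B) 0 0 := by
    have key : (C * A⁻¹ * B) 0 0 = b ⬝ᵥ (A⁻¹ *ᵥ b) := by
      simp only [Matrix.mul_apply, dotProduct, Matrix.mulVec, hB, hC, Matrix.of_apply,
        Finset.sum_mul, Finset.mul_sum, dotProduct]
      rw [Finset.sum_comm]
      apply Finset.sum_congr rfl
      intro i _
      apply Finset.sum_congr rfl
      intro j _
      ring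
    rw [key]
    have := hA.inv.posSemidef.dotProduct_mulVec_nonneg b
    simpa using this
  have hD00 : (D - C * A⁻¹ * B).det = M (Fin.last k) (Fin.last k) - (C * A⁻¹ * B) 0 0 := by
    rw [Matrix.det_fin_one]
    simp [hD]
  rw [hdet, hD00]
  nlinarith [hA.det_pos, hquad]

/-- The information matrix built from the first `k` columns. -/
noncomputable def Amat (n : ℕ) (F : Matrix (Fin n) (Fin n) ℝ) (v : Fin n → ℝ)
    (k : ℕ) (h : k ≤ n) : Matrix (Fin k) (Fin k) ℝ :=
  (F.submatrix id (Fin.castLE h))ᵀ * Matrix.diagonal v * F.submatrix id (Fin.castLE h)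

lemma Amat_apply (n : ℕ) (F : Matrix (Fin n) (Fin n) ℝ) (v : Fin n → ℝ)
    (k : ℕ) (h : k ≤ n) (a b : Fin k) :
    Amat n F v k h a b = ∑ i, v i * (F i (Fin.castLE h a) * F i (Fin.castLE h b)) := by
  rw [Amat, Matrix.mul_apply]
  apply Finset.sum_congr rfl
  intro i _
  rw [Matrix.mul_diagonal]
  simp only [Matrix.transpose_apply, Matrix.submatrix_apply, id_eq]
  ring

/-- Let `F` be an `n×n` Hadamard matrix (±1 entries, `Fᵀ·F = n·I`), and `X` the
`n×q` submatrix of its first `q` columns.  For weights `wi > 0`, proportions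
`pi ≥ 0` summing to `1`, `W = diag(wi·pi)` and `w_M = max wi`, we have
`det(Xᵀ·W·X) ≥ nⁿ·(∏ wi)·(∏ pi)/w_M^{n−q}`. -/
theorem stmt16 (n q : ℕ) (hn : 1 ≤ n) (hq1 : 1 ≤ q) (hq : q ≤ n)
    (F : Matrix (Fin n) (Fin n) ℝ)
    (hF : ∀ i j, F i j = 1 ∨ F i j = -1)
    (hHad : Fᵀ * F = (n : ℝ) • (1 : Matrix (Fin n) (Fin n) ℝ))
    (w p : Fin n → ℝ) (hw : ∀ i, 0 < w i) (hp : ∀ i, 0 ≤ p i)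
    (hsum : ∑ i, p i = 1)
    (wM : ℝ) (hwM : IsGreatest (Set.range w) wM) :
    (n : ℝ) ^ n * (∏ i, w i) * (∏ i, p i) / wM ^ (n - q)
      ≤ ((F.submatrix id (Fin.castLE hq))ᵀ
          * Matrix.diagonal (fun i => w i * p i)
          * F.submatrix id (Fin.castLE hq)).det := by
  classical
  set v : Fin n → ℝ := fun i => w i * p i with hv
  have hgoal : ((F.submatrix id (Fin.castLE hq))ᵀ
      * Matrix.diagonal (fun i => w i * p i)
      * F.submatrix id (Fin.castLE hq)) = Amat n F v q hq := rfl
  rw [hgoal]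
  have hvnn : ∀ i, 0 ≤ v i := fun i => mul_nonneg (hw i).le (hp i)
  have hwM_pos : 0 < wM := lt_of_lt_of_le (hw ⟨0, hn⟩) (hwM.2 ⟨⟨0, hn⟩, rfl⟩)
  by_cases hp0 : ∃ i, p i = 0
  · -- degenerate case: the left side is zero
    obtain ⟨i0, hi0⟩ := hp0
    have hprod0 : (∏ i, p i) = 0 := Finset.prod_eq_zero (Finset.mem_univ i0) hi0
    rw [hprod0, mul_zero, zero_div]
    apply aux_psd_det_nonneg
    have hDiag : (Matrix.diagonal v).PosSemidef :=
      Matrix.PosSemidef.diagonal (fun i => hvnn i)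
    have := hDiag.conjTranspose_mul_mul_same (F.submatrix id (Fin.castLE hq))
    simpa [Amat, Matrix.conjTranspose_eq_transpose_of_trivial] using this
  · push_neg at hp0
    have hp' : ∀ i, 0 < p i := fun i => lt_of_le_of_ne (hp i) (Ne.symm (hp0 i))
    have hvpos : ∀ i, 0 < v i := fun i => mul_pos (hw i) (hp' i)
    -- X_k has orthogonal columns
    have hXTX : ∀ (k : ℕ) (h : k ≤ n),
        (F.submatrix id (Fin.castLE h))ᵀ * (F.submatrix id (Fin.castLE h))
          = (n : ℝ) • (1 : Matrix (Fin k) (Fin k) ℝ) := by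
      intro k h
      ext a b
      have hent := congrFun (congrFun hHad (Fin.castLE h a)) (Fin.castLE h b)
      simp only [Matrix.mul_apply, Matrix.transpose_apply, Matrix.smul_apply,
        Matrix.one_apply, Fin.castLE_inj, smul_eq_mul, Matrix.submatrix_apply,
        id_eq] at hent ⊢
      rw [hent]
    -- positive definiteness of each Amat
    have hApos : ∀ (k : ℕ) (h : k ≤ n), (Amat n F v k h).PosDef := by
      intro k h
      have hDpos : (Matrix.diagonal v).PosDef := Matrix.PosDef.diagonal hvpos
      refine Matrix.PosDef.of_dotProduct_mulVec_pos ?_ ?_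
      · have : ((F.submatrix id (Fin.castLE h))ᴴ * Matrix.diagonal v
            * (F.submatrix id (Fin.castLE h))).IsHermitian :=
          Matrix.isHermitian_conjTranspose_mul_mul _ hDpos.1
        simpa [Amat, Matrix.conjTranspose_eq_transpose_of_trivial] using this
      · intro x hx
        have hXx : (F.submatrix id (Fin.castLE h)) *ᵥ x ≠ 0 := by
          intro h0
          apply hx
          have h1 : ((F.submatrix id (Fin.castLE h))ᵀ
              * (F.submatrix id (Fin.castLE h))) *ᵥ x = 0 := by
            rw [← Matrix.mulVec_mulVec, h0, Matrix.mulVec_zero]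
          rw [hXTX k h] at h1
          rw [Matrix.smul_mulVec, Matrix.one_mulVec] at h1
          have hn0 : (n : ℝ) ≠ 0 := by positivity
          exact (smul_eq_zero.mp h1).resolve_left hn0
        have hq2 := hDpos.dotProduct_mulVec_pos hXx
        have heq : Amat n F v k h = (F.submatrix id (Fin.castLE h))ᴴ
            * Matrix.diagonal v * (F.submatrix id (Fin.castLE h)) := by
          simp [Amat, Matrix.conjTranspose_eq_transpose_of_trivial]
        rw [heq]
        simpa only [Matrix.star_mulVec, Matrix.dotProduct_mulVec, Matrix.vecMul_vecMul]
          using hq2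
    -- the principal submatrix relation
    have hsub : ∀ (k : ℕ) (h : (k+1) ≤ n),
        (Amat n F v (k+1) h).submatrix Fin.castSucc Fin.castSucc
          = Amat n F v k (Nat.le_of_succ_le h) := by
      intro k h
      ext a b
      rw [Matrix.submatrix_apply, Amat_apply, Amat_apply]
      have hc : ∀ c : Fin k, Fin.castLE h c.castSucc
          = Fin.castLE (Nat.le_of_succ_le h) c := fun c => Fin.ext rfl
      rw [hc a, hc b]
    -- last diagonal entry of Amat
    have hlast : ∀ (k : ℕ) (h : (k+1) ≤ n),
        Amat n F v (k+1) h (Fin.last k) (Fin.last k) = ∑ i, v i := by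
      intro k h
      rw [Amat_apply]
      apply Finset.sum_congr rfl
      intro i _
      rcases hF i (Fin.castLE h (Fin.last k)) with h1 | h1 <;> rw [h1] <;> ring
    have hsumv : ∑ i, v i ≤ wM := by
      calc ∑ i, v i ≤ ∑ i, wM * p i :=
            Finset.sum_le_sum fun i _ =>
              mul_le_mul_of_nonneg_right (hwM.2 ⟨i, rfl⟩) (hp i)
        _ = wM := by rw [← Finset.mul_sum, hsum, mul_one]
    -- main downward induction
    have key : ∀ (k : ℕ), q ≤ k → ∀ hk : k ≤ n,
        (Amat n F v k hk).det ≤ wM ^ (k - q) * (Amat n F v q hq).det := by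
      intro k hqk
      induction k, hqk using Nat.le_induction with
      | base => intro hk; simp
      | succ k hqk ih =>
        intro hk
        have hk' : k ≤ n := Nat.le_of_succ_le hk
        have hfis := aux_fischer (Amat n F v (k+1) hk) (hApos (k+1) hk).1
          (by rw [hsub k hk]; exact hApos k hk')
        rw [hsub k hk, hlast k hk] at hfis
        have hdnn : 0 ≤ (Amat n F v k hk').det := (hApos k hk').det_pos.le
        have h1 : (Amat n F v (k+1) hk).det ≤ wM * (Amat n F v k hk').det :=
          hfis.trans (mul_le_mul_of_nonneg_right hsumv hdnn)
        have h2 := ih hk'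
        have h3 : (k+1) - q = (k - q) + 1 := by omega
        rw [h3, pow_succ]
        calc (Amat n F v (k+1) hk).det ≤ wM * (Amat n F v k hk').det := h1
          _ ≤ wM * (wM ^ (k - q) * (Amat n F v q hq).det) :=
              mul_le_mul_of_nonneg_left h2 hwM_pos.le
          _ = wM ^ (k - q) * wM * (Amat n F v q hq).det := by ring
    -- determinant of the full matrix
    have hFsub : F.submatrix id (Fin.castLE (le_refl n)) = F := by
      rw [Fin.castLE_rfl]
      exact Matrix.submatrix_id_id F
    have hdetn : (Amat n F v n (le_refl n)).det = (n : ℝ) ^ n * ∏ i, v i := by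
      have h2 : F.det * F.det = (n : ℝ) ^ n := by
        have := congrArg Matrix.det hHad
        rwa [Matrix.det_mul, Matrix.det_transpose, Matrix.det_smul, Matrix.det_one,
          mul_one, Fintype.card_fin] at this
      rw [Amat, hFsub, Matrix.det_mul, Matrix.det_mul, Matrix.det_transpose,
        Matrix.det_diagonal]
      linear_combination (∏ i, v i) * h2
    have hkey := key n hq (le_refl n)
    rw [hdetn] at hkey
    have hprod : ∏ i, v i = (∏ i, w i) * ∏ i, p i := Finset.prod_mul_distrib
    rw [hprod] at hkey
    rw [div_le_iff₀ (pow_pos hwM_pos _)]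
    nlinarith [hkey]
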